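/- Suppose b* ∈ (0, b̂] satisfies I(b*) − I'(b*)·φ(b*)/φ'(b*) = ψ(b*)/ψ'(b*) − φ(b*)/φ'(b*), and define V : (0,∞) → ℝ by V(x) = ψ(x)/ψ'(b*) for 0 < x ≤ b* and V(x) = I(x) + ((1 − I'(b*))/φ'(b*))·φ(x) for x ≥ b*. Then V is twice continuously differentiable on (0,∞) and concave (V''(x) ≤ 0 for all x > 0). -/

import Mathlib

set_option maxHeartbeats 1600000

/-- if b* ∈ (0, b̂] satisfies the first-order condition, then the
piecewise function V (equal to ψ(x)/ψ'(b*) for x ≤ b* and to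
I(x) + ((1 − I'(b*))/φ'(b*))·φ(x) for x ≥ b*) is C² on (0,∞) and concave there. -/
theorem stmt_12 (μ σ q : ℝ) (hμ : 0 < μ) (hσ : 0 < σ) (hq : 0 < q)
    (Δ : ℝ) (hΔ : Δ = Real.sqrt (μ ^ 2 + 2 * q * σ ^ 2))
    (ψ : ℝ → ℝ)
    (hψ : ∀ x : ℝ, ψ x =
      σ ^ 2 / Δ * Real.exp (-(μ / σ ^ 2) * x) * Real.sinh (Δ * x / σ ^ 2))
    (bhat : ℝ) (hbhat_pos : 0 < bhat) (hbhat : deriv (deriv ψ) bhat = 0)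
    (hbhat_uniq : ∀ b > (0:ℝ), deriv (deriv ψ) b = 0 → b = bhat)
    (F φ I : ℝ → ℝ)
    (hφC : ContDiff ℝ 2 φ) (hφ0 : φ 0 = 1)
    (hφ' : ∀ x ≥ (0:ℝ), deriv φ x < 0)
    (hφ'' : ∀ x ≥ (0:ℝ), 0 < deriv (deriv φ) x)
    (hφODE : ∀ x > (0:ℝ),
      σ ^ 2 / 2 * deriv (deriv φ) x + (μ - F x) * deriv φ x - q * φ x = 0)
    (hIC : ContDiff ℝ 2 I)
    (hIconc : ∀ x ≥ (0:ℝ), deriv (deriv I) x ≤ 0)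
    (hI' : ∀ x ≥ (0:ℝ), 0 ≤ deriv I x ∧ deriv I x ≤ 1)
    (hIODE : ∀ x > (0:ℝ),
      σ ^ 2 / 2 * deriv (deriv I) x + (μ - F x) * deriv I x - q * I x = -F x)
    (bs : ℝ) (hbs_pos : 0 < bs) (hbs_le : bs ≤ bhat)
    (hbs : I bs - deriv I bs * φ bs / deriv φ bs
      = ψ bs / deriv ψ bs - φ bs / deriv φ bs)
    (V : ℝ → ℝ)
    (hV : ∀ x : ℝ, V x = if x ≤ bs then ψ x / deriv ψ bs
      else I x + (1 - deriv I bs) / deriv φ bs * φ x) :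
    ContDiffOn ℝ 2 V (Set.Ioi 0) ∧ ∀ x > (0:ℝ), deriv (deriv V) x ≤ 0 := by
  have hσ2 : (0:ℝ) < σ ^ 2 := by positivity
  have hargpos : (0:ℝ) < μ ^ 2 + 2 * q * σ ^ 2 := by positivity
  have hΔpos : 0 < Δ := by rw [hΔ]; exact Real.sqrt_pos.mpr hargpos
  have hΔsq : Δ ^ 2 = μ ^ 2 + 2 * q * σ ^ 2 := by
    rw [hΔ]; exact Real.sq_sqrt hargpos.le
  set α := μ / σ ^ 2 with hα
  set β := Δ / σ ^ 2 with hβdef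
  set C := σ ^ 2 / Δ with hC
  have hCpos : 0 < C := by positivity
  have hαpos : 0 < α := by positivity
  have hβpos : 0 < β := by positivity
  have hμΔ : μ < Δ := by
    rw [hΔ]
    have : μ = Real.sqrt (μ ^ 2) := by
      rw [Real.sqrt_sq hμ.le]
    nth_rewrite 1 [this]
    apply Real.sqrt_lt_sqrt (by positivity)
    nlinarith
  have hαβ : α < β := by
    rw [hα, hβdef]
    apply div_lt_div_of_pos_right hμΔ hσ2
  have hqβ : 2 * q = σ ^ 2 * (β ^ 2 - α ^ 2) := by
    rw [hβdef, hα]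
    field_simp
    nlinarith [hΔsq]
  have hμα : μ = α * σ ^ 2 := by rw [hα]; field_simp
  -- explicit derivatives of ψ
  set ψ1 : ℝ → ℝ := fun x => C * Real.exp (-α * x) *
    (β * Real.cosh (β * x) - α * Real.sinh (β * x)) with hψ1
  set ψ2 : ℝ → ℝ := fun x => C * Real.exp (-α * x) *
    ((α ^ 2 + β ^ 2) * Real.sinh (β * x) - 2 * α * β * Real.cosh (β * x)) with hψ2
  have hψeq : ∀ x, ψ x = C * Real.exp (-α * x) * Real.sinh (β * x) := by
    intro x
    rw [hψ x]
    have h1 : Δ * x / σ ^ 2 = β * x := by rw [hβdef]; ring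
    rw [h1]
  have hψfun : ψ = fun y => C * Real.exp (-α * y) * Real.sinh (β * y) := funext hψeq
  have hexp : ∀ x : ℝ, HasDerivAt (fun y => Real.exp (-α * y))
      (-α * Real.exp (-α * x)) x := by
    intro x
    have h1 : HasDerivAt (fun y : ℝ => -α * y) (-α) x := by
      simpa using (hasDerivAt_id x).const_mul (-α)
    simpa [mul_comm] using h1.exp
  have hsinh : ∀ x : ℝ, HasDerivAt (fun y => Real.sinh (β * y))
      (β * Real.cosh (β * x)) x := by
    intro x
    have h1 : HasDerivAt (fun y : ℝ => β * y) β x := by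
      simpa using (hasDerivAt_id x).const_mul β
    have h2 : HasDerivAt (fun y => Real.sinh (β * y)) (Real.cosh (β * x) * β) x :=
      (Real.hasDerivAt_sinh (β * x)).comp x h1
    convert h2 using 1
    ring
  have hcosh : ∀ x : ℝ, HasDerivAt (fun y => Real.cosh (β * y))
      (β * Real.sinh (β * x)) x := by
    intro x
    have h1 : HasDerivAt (fun y : ℝ => β * y) β x := by
      simpa using (hasDerivAt_id x).const_mul β
    have h2 : HasDerivAt (fun y => Real.cosh (β * y)) (Real.sinh (β * x) * β) x :=
      (Real.hasDerivAt_cosh (β * x)).comp x h1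
    convert h2 using 1
    ring
  have hψd : ∀ x, HasDerivAt ψ (ψ1 x) x := by
    rw [hψfun]
    intro x
    have h : HasDerivAt (fun y => C * Real.exp (-α * y) * Real.sinh (β * y)) _ x :=
      ((hexp x).const_mul C).mul (hsinh x)
    convert h using 1
    simp only [hψ1]
    ring
  have hψ1d : ∀ x, HasDerivAt ψ1 (ψ2 x) x := by
    rw [hψ1]
    intro x
    have h1 : HasDerivAt (fun y => β * Real.cosh (β * y) - α * Real.sinh (β * y))
        (β * (β * Real.sinh (β * x)) - α * (β * Real.cosh (β * x))) x :=
      ((hcosh x).const_mul β).sub ((hsinh x).const_mul α)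
    have h : HasDerivAt (fun y => C * Real.exp (-α * y) *
        (β * Real.cosh (β * y) - α * Real.sinh (β * y))) _ x :=
      ((hexp x).const_mul C).mul h1
    convert h using 1
    simp only [hψ2]
    ring
  have hderivψ : deriv ψ = ψ1 := funext fun x => (hψd x).deriv
  have hderivψ1 : deriv ψ1 = ψ2 := funext fun x => (hψ1d x).deriv
  have hψ'' : deriv (deriv ψ) = ψ2 := by rw [hderivψ, hderivψ1]
  -- positivity of ψ1
  have hψ1pos : ∀ x, 0 < ψ1 x := by
    intro x
    simp only [hψ1]
    have h1 := Real.cosh_pos (β * x)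
    have h2 : Real.sinh (β * x) < Real.cosh (β * x) := by
      nlinarith [Real.cosh_sub_sinh (β * x), Real.exp_pos (-(β * x))]
    have h3 := Real.exp_pos (-α * x)
    apply mul_pos (mul_pos hCpos h3)
    have h4 : α * Real.sinh (β * x) ≤ α * Real.cosh (β * x) :=
      mul_le_mul_of_nonneg_left h2.le hαpos.le
    have h5 : α * Real.cosh (β * x) < β * Real.cosh (β * x) :=
      mul_lt_mul_of_pos_right hαβ h1
    linarith
  -- ψ2 is negative at 0
  have hψ20 : ψ2 0 < 0 := by
    simp only [hψ2, mul_zero, Real.sinh_zero, Real.cosh_zero, Real.exp_zero]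
    nlinarith [mul_pos hCpos (mul_pos hαpos hβpos)]
  have hψ2cont : Continuous ψ2 := by
    rw [hψ2]
    fun_prop
  -- ψ2 nonpositive on (0, bhat]
  have hψ2nonpos : ∀ x, 0 < x → x ≤ bhat → ψ2 x ≤ 0 := by
    intro x hx hxb
    by_contra hcon
    push_neg at hcon
    rw [hψ''] at hbhat
    have hx_ne : x ≠ bhat := by
      intro h
      rw [h, hbhat] at hcon
      exact lt_irrefl 0 hcon
    have hivt := intermediate_value_Icc hx.le hψ2cont.continuousOn
    have h0mem : (0:ℝ) ∈ Set.Icc (ψ2 0) (ψ2 x) := ⟨hψ20.le, hcon.le⟩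
    obtain ⟨z, hz, hz0⟩ := hivt h0mem
    have hzpos : 0 < z := by
      rcases eq_or_lt_of_le hz.1 with h | h
      · rw [← h] at hz0; rw [hz0] at hψ20; exact absurd hψ20 (lt_irrefl 0)
      · exact h
    have hzb := hbhat_uniq z hzpos (by rw [hψ'']; exact hz0)
    have : z < bhat := lt_of_le_of_lt hz.2 (lt_of_le_of_ne hxb hx_ne)
    rw [hzb] at this
    exact lt_irrefl bhat this
  -- the ODE for ψ
  have hψODEall : ∀ x, σ ^ 2 / 2 * ψ2 x + μ * ψ1 x - q * ψ x = 0 := by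
    intro x
    rw [hψeq x]
    simp only [hψ1, hψ2]
    linear_combination (C * Real.exp (-α * x) * (β * Real.cosh (β * x)
      - α * Real.sinh (β * x))) * hμα
      - (C * Real.exp (-α * x) * Real.sinh (β * x) / 2) * hqβ
  -- regularity of φ and I
  have h2eq : (2 : WithTop ℕ∞) = 1 + 1 := by norm_num
  rw [h2eq] at hφC hIC
  have hφdiff : Differentiable ℝ φ := hφC.differentiable (by norm_num)
  have hφC1 : ContDiff ℝ 1 (deriv φ) := (contDiff_succ_iff_deriv.mp hφC).2.2
  have hφd'diff : Differentiable ℝ (deriv φ) := hφC1.differentiable (by norm_num)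
  have hφ''cont : Continuous (deriv (deriv φ)) := (contDiff_one_iff_deriv.mp hφC1).2
  have hIdiff : Differentiable ℝ I := hIC.differentiable (by norm_num)
  have hIC1 : ContDiff ℝ 1 (deriv I) := (contDiff_succ_iff_deriv.mp hIC).2.2
  have hId'diff : Differentiable ℝ (deriv I) := hIC1.differentiable (by norm_num)
  have hI''cont : Continuous (deriv (deriv I)) := (contDiff_one_iff_deriv.mp hIC1).2
  -- rewrite hypotheses with ψ1
  rw [hderivψ] at hbs
  simp only [hderivψ] at hV
  set c0 := (1 - deriv I bs) / deriv φ bs with hc0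
  have hφ'bs : deriv φ bs < 0 := hφ' bs hbs_pos.le
  have hφ'ne : deriv φ bs ≠ 0 := ne_of_lt hφ'bs
  have hψ1bs : 0 < ψ1 bs := hψ1pos bs
  have hψ1ne : ψ1 bs ≠ 0 := ne_of_gt hψ1bs
  -- value matching
  have hval : ψ bs / ψ1 bs = I bs + c0 * φ bs := by
    have hsplit : (1 - deriv I bs) / deriv φ bs * φ bs
        = φ bs / deriv φ bs - deriv I bs * φ bs / deriv φ bs := by
      field_simp
    rw [hc0, hsplit]
    linarith [hbs]
  -- slope matching
  have hslope : deriv I bs + c0 * deriv φ bs = 1 := by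
    rw [hc0, div_mul_cancel₀ _ hφ'ne]
    ring
  -- second derivative matching
  have hsecond : ψ2 bs / ψ1 bs = deriv (deriv I) bs + c0 * deriv (deriv φ) bs := by
    have h1 := hIODE bs hbs_pos
    have h2 := hφODE bs hbs_pos
    have h3 := hψODEall bs
    have hψval : ψ bs = (I bs + c0 * φ bs) * ψ1 bs := (div_eq_iff hψ1ne).mp hval
    rw [div_eq_iff hψ1ne]
    have key : σ ^ 2 / 2 * ψ2 bs
        = σ ^ 2 / 2 * ((deriv (deriv I) bs + c0 * deriv (deriv φ) bs) * ψ1 bs) := by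
      linear_combination h3 - ψ1 bs * h1 - ψ1 bs * c0 * h2
        + ψ1 bs * (μ - F bs) * hslope + q * hψval
    exact mul_left_cancel₀ (by positivity : σ ^ 2 / 2 ≠ (0:ℝ)) key
  -- the piecewise derivative candidates
  set V1 : ℝ → ℝ := fun x => if x ≤ bs then ψ1 x / ψ1 bs
    else deriv I x + c0 * deriv φ x with hV1
  set V2 : ℝ → ℝ := fun x => if x ≤ bs then ψ2 x / ψ1 bs
    else deriv (deriv I) x + c0 * deriv (deriv φ) x with hV2
  have hWd : ∀ x, HasDerivAt (fun y => I y + c0 * φ y)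
      (deriv I x + c0 * deriv φ x) x := fun x =>
    ((hIdiff x).hasDerivAt).add (((hφdiff x).hasDerivAt).const_mul c0)
  have hVW : ∀ y, bs ≤ y → V y = I y + c0 * φ y := by
    intro y hy
    rcases eq_or_lt_of_le hy with h | hlt
    · rw [← h, hV bs, if_pos le_rfl]
      exact hval
    · rw [hV y, if_neg (not_le.mpr hlt)]
  have hVd : ∀ x, HasDerivAt V (V1 x) x := by
    intro x
    rcases lt_trichotomy x bs with h | h | h
    · have heq : Set.EqOn V (fun y => ψ y / ψ1 bs) (Set.Iio bs) := fun y hy => by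
        rw [hV y, if_pos (le_of_lt hy)]
      have hd := ((hψd x).div_const (ψ1 bs)).congr_of_eventuallyEq
        (Filter.eventuallyEq_of_mem (Iio_mem_nhds h) heq)
      have hx' : V1 x = ψ1 x / ψ1 bs := by simp [hV1, h.le]
      rw [hx']
      exact hd
    · have hleft : HasDerivWithinAt V (1:ℝ) (Set.Iic bs) bs := by
        have hd : HasDerivWithinAt (fun y => ψ y / ψ1 bs) (ψ1 bs / ψ1 bs)
            (Set.Iic bs) bs := ((hψd bs).div_const (ψ1 bs)).hasDerivWithinAt
        rw [div_self hψ1ne] at hd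
        exact hd.congr (fun y hy => by rw [hV y, if_pos (show _ ≤ bs from hy)]) (by rw [hV bs, if_pos le_rfl])
      have hright : HasDerivWithinAt V (1:ℝ) (Set.Ici bs) bs := by
        have hd : HasDerivWithinAt (fun y => I y + c0 * φ y)
            (deriv I bs + c0 * deriv φ bs) (Set.Ici bs) bs := (hWd bs).hasDerivWithinAt
        rw [hslope] at hd
        exact hd.congr (fun y hy => hVW y hy) (hVW bs le_rfl)
      have hu := hleft.union hright
      rw [Set.Iic_union_Ici] at hu
      have hx' : V1 x = 1 := by
        simp only [hV1]
        rw [if_pos h.le, h, div_self hψ1ne]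
      rw [hx', h]
      exact hasDerivWithinAt_univ.mp hu
    · have heq : Set.EqOn V (fun y => I y + c0 * φ y) (Set.Ioi bs) := fun y hy =>
        hVW y (le_of_lt hy)
      have hd := (hWd x).congr_of_eventuallyEq
        (Filter.eventuallyEq_of_mem (Ioi_mem_nhds h) heq)
      have hx' : V1 x = deriv I x + c0 * deriv φ x := by
        simp [hV1, not_le.mpr h]
      rw [hx']
      exact hd
  have hW1d : ∀ x, HasDerivAt (fun y => deriv I y + c0 * deriv φ y)
      (deriv (deriv I) x + c0 * deriv (deriv φ) x) x := fun x =>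
    ((hId'diff x).hasDerivAt).add (((hφd'diff x).hasDerivAt).const_mul c0)
  have hV1W : ∀ y, bs ≤ y → V1 y = deriv I y + c0 * deriv φ y := by
    intro y hy
    rcases eq_or_lt_of_le hy with h | hlt
    · rw [← h]
      simp only [hV1]
      rw [if_pos le_rfl, div_self hψ1ne, ← hslope]
    · simp only [hV1]
      rw [if_neg (not_le.mpr hlt)]
  have hV1d : ∀ x, HasDerivAt V1 (V2 x) x := by
    intro x
    rcases lt_trichotomy x bs with h | h | h
    · have heq : Set.EqOn V1 (fun y => ψ1 y / ψ1 bs) (Set.Iio bs) := fun y hy => by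
        simp only [hV1]; rw [if_pos (le_of_lt hy)]
      have hd := ((hψ1d x).div_const (ψ1 bs)).congr_of_eventuallyEq
        (Filter.eventuallyEq_of_mem (Iio_mem_nhds h) heq)
      have hx' : V2 x = ψ2 x / ψ1 bs := by simp [hV2, h.le]
      rw [hx']
      exact hd
    · have hleft : HasDerivWithinAt V1 (ψ2 bs / ψ1 bs) (Set.Iic bs) bs := by
        have hd : HasDerivWithinAt (fun y => ψ1 y / ψ1 bs) (ψ2 bs / ψ1 bs)
            (Set.Iic bs) bs := ((hψ1d bs).div_const (ψ1 bs)).hasDerivWithinAt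
        exact hd.congr (fun y hy => by simp only [hV1]; rw [if_pos (show _ ≤ bs from hy)])
          (by simp only [hV1]; rw [if_pos le_rfl])
      have hright : HasDerivWithinAt V1 (ψ2 bs / ψ1 bs) (Set.Ici bs) bs := by
        have hd : HasDerivWithinAt (fun y => deriv I y + c0 * deriv φ y)
            (deriv (deriv I) bs + c0 * deriv (deriv φ) bs)
            (Set.Ici bs) bs := (hW1d bs).hasDerivWithinAt
        rw [← hsecond] at hd
        exact hd.congr (fun y hy => hV1W y hy) (hV1W bs le_rfl)
      have hu := hleft.union hright
      rw [Set.Iic_union_Ici] at hu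
      have hx' : V2 x = ψ2 bs / ψ1 bs := by
        simp only [hV2]
        rw [if_pos h.le, h]
      rw [hx', h]
      exact hasDerivWithinAt_univ.mp hu
    · have heq : Set.EqOn V1 (fun y => deriv I y + c0 * deriv φ y) (Set.Ioi bs) :=
        fun y hy => hV1W y (le_of_lt hy)
      have hd := (hW1d x).congr_of_eventuallyEq
        (Filter.eventuallyEq_of_mem (Ioi_mem_nhds h) heq)
      have hx' : V2 x = deriv (deriv I) x + c0 * deriv (deriv φ) x := by
        simp [hV2, not_le.mpr h]
      rw [hx']
      exact hd
  have hdV : deriv V = V1 := funext fun x => (hVd x).deriv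
  have hdV1 : deriv V1 = V2 := funext fun x => (hV1d x).deriv
  have hV2cont : Continuous V2 := by
    rw [hV2]
    apply Continuous.if_le
    · exact hψ2cont.div_const _
    · exact hI''cont.add (continuous_const.mul hφ''cont)
    · exact continuous_id
    · exact continuous_const
    · intro y hy
      rw [hy]
      exact hsecond
  have hVC2 : ContDiff ℝ 2 V := by
    rw [h2eq, contDiff_succ_iff_deriv]
    refine ⟨fun x => (hVd x).differentiableAt, by simp, ?_⟩
    rw [hdV, contDiff_one_iff_deriv, hdV1]
    exact ⟨fun x => (hV1d x).differentiableAt, hV2cont⟩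
  refine ⟨hVC2.contDiffOn, ?_⟩
  intro x hx
  rw [hdV, hdV1]
  simp only [hV2]
  by_cases h : x ≤ bs
  · rw [if_pos h]
    exact div_nonpos_of_nonpos_of_nonneg (hψ2nonpos x hx (le_trans h hbs_le)) hψ1bs.le
  · rw [if_neg h]
    push_neg at h
    have hc0np : c0 ≤ 0 := by
      rw [hc0]
      apply div_nonpos_of_nonneg_of_nonpos
      · linarith [(hI' bs hbs_pos.le).2]
      · exact hφ'bs.le
    have h1 := hIconc x hx.le
    have h2 := hφ'' x hx.le
    nlinarith
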